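/- For n ≥ 2, the residue at w = 0 of (1+w)^n / (w^{n-2}(1+nw)) equals (n−2)(n+1)/(2n) + (1 − (1−n)^n)/n³. -/

import Mathlib

open PowerSeries HahnSeries Finset

lemma geom_inv (c : ℚ) :
    (1 + PowerSeries.C c * PowerSeries.X) * PowerSeries.mk (fun k => (-c) ^ k) = 1 := by
  ext k
  rcases k with _ | k
  · simp
  · simp [add_mul, mul_assoc, PowerSeries.coeff_C_mul, PowerSeries.coeff_succ_X_mul, pow_succ]
    ring

lemma sum_eval (m : ℕ) :
    ∑ i ∈ range (m+1), (((m+3).choose i : ℚ)) * (-((m+3 : ℕ) : ℚ))^(m-i)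
      = (((m+3:ℕ):ℚ) - 2) * (((m+3:ℕ):ℚ) + 1) / (2 * ((m+3:ℕ):ℚ))
        + (1 - (1 - ((m+3:ℕ):ℚ)) ^ (m+3)) / ((m+3:ℕ):ℚ) ^ 3 := by
  set c : ℚ := ((m+3:ℕ):ℚ) with hc
  have hcm : c = (m:ℚ) + 3 := by rw [hc]; push_cast; ring
  have hc0 : c ≠ 0 := by rw [hcm]; positivity
  set S : ℚ := ∑ i ∈ range (m+1), (((m+3).choose i : ℚ)) * (-c)^(m-i) with hS
  have hbin : (1 + (-c))^(m+3)
      = ∑ i ∈ range (m+4), 1^i * (-c)^(m+3-i) * ((m+3).choose i : ℚ) := add_pow 1 (-c) (m+3)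
  rw [show m+4 = (m+3)+1 from rfl, sum_range_succ, show m+3 = (m+2)+1 from rfl,
    sum_range_succ, show m+2 = (m+1)+1 from rfl, sum_range_succ] at hbin
  have hstep : ∑ i ∈ range (m+1), 1^i * (-c)^(m+1+1+1-i) * ((m+3).choose i : ℚ)
      = (-c)^3 * S := by
    rw [hS, Finset.mul_sum]
    apply Finset.sum_congr rfl
    intro i hi
    have h1 : m + 1 + 1 + 1 - i = (m - i) + 3 := by
      have := Finset.mem_range.mp hi; omega
    rw [h1, _root_.pow_add, one_pow]; ring
  have hch2 : (((m+3).choose (m+1) : ℕ) : ℚ) = c * (c-1) / 2 := by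
    have h : (m+3).choose (m+1) = (m+3).choose 2 := by
      rw [show m+1 = m+3-2 from by omega, Nat.choose_symm (by omega : 2 ≤ m+3)]
    rw [h, Nat.cast_choose_two, hcm]
    push_cast
    ring
  have hch1 : (((m+3).choose (m+2) : ℕ) : ℚ) = c := by
    have h : (m+3).choose (m+2) = (m+3).choose 1 := by
      rw [show m+2 = m+3-1 from by omega, Nat.choose_symm (by omega : 1 ≤ m+3)]
    rw [h, Nat.choose_one_right, hc]
  have hch0 : (((m+3).choose (m+3) : ℕ) : ℚ) = 1 := by
    rw [show m+1+1+1 = m+3 from rfl, Nat.choose_self, Nat.cast_one]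
  have h2 : m+1+1+1-(m+1) = 2 := by omega
  have h1 : m+1+1+1-(m+1+1) = 1 := by omega
  rw [hstep, hch2, hch1, hch0, h2, h1, Nat.sub_self] at hbin
  have hSval : S = ((1 + -c)^(m+3) - c^2*(c*(c-1)/2) + c^2 - 1)/(-c^3) := by
    rw [eq_div_iff (neg_ne_zero.mpr (pow_ne_zero 3 hc0))]
    linear_combination -hbin
  rw [hSval]
  field_simp
  ring



/-- For `n ≥ 2`, the residue at `w = 0` of
`(1+w)^n / (w^{n-2}(1+nw))` (the coefficient of `w^{-1}` in the Laurent expansion at `0`)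
equals `(n−2)(n+1)/(2n) + (1 − (1−n)^n)/n³`. -/
theorem residue_eps1_hypersurface (n : ℕ) (hn : 2 ≤ n) :
    (((((1 + RatFunc.X) ^ n /
          (RatFunc.X ^ (n - 2) * (1 + (n : RatFunc ℚ) * RatFunc.X))) : RatFunc ℚ) :
        LaurentSeries ℚ)).coeff (-1)
      = ((n : ℚ) - 2) * ((n : ℚ) + 1) / (2 * n) + (1 - (1 - (n : ℚ)) ^ n) / (n : ℚ) ^ 3 := by
  set Q : ℚ⟦X⟧ := PowerSeries.mk (fun k => (-(n : ℚ)) ^ k) with hQdef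
  set A : ℚ⟦X⟧ := (1 + PowerSeries.X) ^ n with hAdef
  set B : ℚ⟦X⟧ := 1 + (n : ℚ⟦X⟧) * PowerSeries.X with hBdef
  have hBQ : B * Q = 1 := by
    have := geom_inv (n : ℚ)
    simpa [hBdef, hQdef, map_natCast] using this
  have hNQ : (((n : ℚ⟦X⟧)) : LaurentSeries ℚ) = (n : LaurentSeries ℚ) :=
    map_natCast (ofPowerSeries ℤ ℚ) n
  have hNR : (((n : RatFunc ℚ)) : LaurentSeries ℚ) = (n : LaurentSeries ℚ) := by
    exact map_natCast _ n
  have hcoeB : ((B : ℚ⟦X⟧) : LaurentSeries ℚ) = 1 + (n : LaurentSeries ℚ) * single 1 1 := by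
    rw [hBdef, PowerSeries.coe_add, PowerSeries.coe_mul, PowerSeries.coe_one,
      PowerSeries.coe_X, hNQ]
  have hcoeA : ((A : ℚ⟦X⟧) : LaurentSeries ℚ) = (1 + single 1 1) ^ n := by
    rw [hAdef, PowerSeries.coe_pow, PowerSeries.coe_add, PowerSeries.coe_one, PowerSeries.coe_X]
  have hBne : ((B : ℚ⟦X⟧) : LaurentSeries ℚ) ≠ 0 := by
    have : ((B : ℚ⟦X⟧) : LaurentSeries ℚ) * Q = 1 := by
      rw [← PowerSeries.coe_mul, hBQ, PowerSeries.coe_one]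
    exact left_ne_zero_of_mul_eq_one this
  have hXpow : (single 1 1 : LaurentSeries ℚ) ^ (n - 2) = single ((n - 2 : ℕ) : ℤ) 1 := by
    rw [HahnSeries.single_pow]
    simp
  have hXne : (single 1 1 : LaurentSeries ℚ) ^ (n - 2) ≠ 0 :=
    pow_ne_zero _ (HahnSeries.single_ne_zero one_ne_zero)
  have hcoe : ((((1 + RatFunc.X) ^ n /
          (RatFunc.X ^ (n - 2) * (1 + (n : RatFunc ℚ) * RatFunc.X))) : RatFunc ℚ) :
        LaurentSeries ℚ)
      = single (-((n - 2 : ℕ) : ℤ)) 1 * ((A * Q : ℚ⟦X⟧) : LaurentSeries ℚ) := by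
    simp only [map_div₀, map_pow, map_mul, map_add,
      map_one, RatFunc.coe_X, hNR]
    rw [← hcoeA, ← hcoeB, div_eq_iff (mul_ne_zero hXne hBne), hXpow]
    symm
    calc single (-((n - 2 : ℕ) : ℤ)) 1 * (((A : ℚ⟦X⟧) : LaurentSeries ℚ) * ((Q : ℚ⟦X⟧) : LaurentSeries ℚ)) *
          (single ((n - 2 : ℕ) : ℤ) 1 * ((B : ℚ⟦X⟧) : LaurentSeries ℚ))
        = (single (-((n - 2 : ℕ) : ℤ)) 1 * single ((n - 2 : ℕ) : ℤ) (1:ℚ)) *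
            (((A : ℚ⟦X⟧) : LaurentSeries ℚ) *
              (((Q : ℚ⟦X⟧) : LaurentSeries ℚ) * ((B : ℚ⟦X⟧) : LaurentSeries ℚ))) := by
          ring
      _ = ((A : ℚ⟦X⟧) : LaurentSeries ℚ) := by
          rw [HahnSeries.single_mul_single, neg_add_cancel, one_mul, ← PowerSeries.coe_mul,
            mul_comm Q B, hBQ, PowerSeries.coe_one, mul_one]
          simp
  rw [hcoe]
  have hidx : (-1 : ℤ) = ((n : ℤ) - 3) + (-((n - 2 : ℕ) : ℤ)) := by
    rw [Nat.cast_sub hn]; push_cast; ring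
  rw [hidx, HahnSeries.coeff_single_mul_add, one_mul]
  rcases Nat.lt_or_ge n 3 with h3 | h3
  · have hn2 : n = 2 := by omega
    subst hn2
    rw [show ((2:ℕ):ℤ) - 3 = (-1:ℤ) by norm_num]
    rw [PowerSeries.coeff_coe, if_pos (by norm_num)]
    norm_num
  · obtain ⟨m, rfl⟩ : ∃ m, n = m + 3 := ⟨n - 3, by omega⟩
    rw [show ((m+3:ℕ):ℤ) - 3 = ((m:ℕ):ℤ) by push_cast; ring,
      PowerSeries.coeff_coe, if_neg (by simp), Int.natAbs_natCast]
    rw [PowerSeries.coeff_mul]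
    have hA : ∀ i, PowerSeries.coeff i A = ((m+3).choose i : ℚ) := by
      intro i
      have h : A = (((1 + Polynomial.X) ^ (m+3) : Polynomial ℚ) : PowerSeries ℚ) := by
        rw [hAdef, Polynomial.coe_pow, Polynomial.coe_add, Polynomial.coe_one, Polynomial.coe_X]
      rw [h, Polynomial.coeff_coe, Polynomial.coeff_one_add_X_pow]
    have hQ : ∀ j, PowerSeries.coeff j Q = (-((m+3:ℕ):ℚ)) ^ j := by
      intro j
      rw [hQdef, PowerSeries.coeff_mk]
    calc ∑ p ∈ Finset.HasAntidiagonal.antidiagonal m, PowerSeries.coeff p.1 A * PowerSeries.coeff p.2 Q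
        = ∑ p ∈ Finset.HasAntidiagonal.antidiagonal m, (((m+3).choose p.1 : ℚ)) * (-((m+3:ℕ):ℚ)) ^ p.2 := by
          exact Finset.sum_congr rfl fun p _ => by rw [hA, hQ]
      _ = ∑ i ∈ range (m+1), (((m+3).choose i : ℚ)) * (-((m+3:ℕ):ℚ)) ^ (m-i) :=
          Finset.Nat.sum_antidiagonal_eq_sum_range_succ (fun i j => (((m+3).choose i : ℚ)) * (-((m+3:ℕ):ℚ)) ^ j) m
      _ = _ := sum_eval m
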